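/- Let L be a finite relational language, H a hereditary L-property, φ(x̄;ȳ) a quantifier-free L-formula, ℓ ≥ 1, and N ≥ m ≥ 1 integers. There exists K₀ (depending on φ, ℓ, N, m) such that for all K ≥ K₀: if M is an L-structure, 𝔸 ⊆ M^{|ȳ|} is an (ℓ,|ȳ|)-box of height K with |S_φ^H(𝔸)| = 2^{K^ℓ}, 𝔸′ ⊆ 𝔸 is a sub-box of height m, and 𝔻 ⊆ M^{|x̄|} contains at least one realization of every element of S_φ^H(𝔸), then 𝔻 contains at least N realizations of every element of S_φ^H(𝔸′). -/

import Mathlib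

open FirstOrder Set Function Filter

universe u v w

namespace PaperVC

/-- `𝔸` is an `(ℓ,t)`-box of height `m` in `X`: it is a concatenation product `A₁ ⋯ A_ℓ` of sets
`A_i ⊆ X^{k_i}` (`k_i ≥ 1`, `k₁+⋯+k_ℓ = t`); the fibers of a monotone surjection
`c : Fin t → Fin ℓ` encode the consecutive blocks of coordinates, and each `A_i` has size `m`.
By convention a `(0,t)`-box with `t ≥ 1` is a singleton, and a `(0,0)`-box is the empty set. -/
def IsBoxOfHeight (X : Type*) (ℓ t m : ℕ) (𝔸 : Set (Fin t → X)) : Prop :=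
  (ℓ = 0 ∧ t = 0 ∧ 𝔸 = ∅) ∨
  (ℓ = 0 ∧ 0 < t ∧ ∃ b, 𝔸 = {b}) ∨
  (0 < ℓ ∧ ∃ c : Fin t → Fin ℓ, Monotone c ∧ Function.Surjective c ∧
    ∃ A : (i : Fin ℓ) → Set ({j : Fin t // c j = i} → X),
      (∀ i, (A i).Finite ∧ (A i).ncard = m) ∧
      𝔸 = { b | ∀ i, (fun j : {j : Fin t // c j = i} => b j.1) ∈ A i })

/-- The underlying set of a set of tuples: the set of all coordinates of its tuples. -/
def underlying {X : Type*} {t : ℕ} (𝔹 : Set (Fin t → X)) : Set X :=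
  { x | ∃ b ∈ 𝔹, ∃ j, b j = x }

/-- A family `F` of subsets of `Y` shatters `A ⊆ Y` if every subset of `A` is cut out by a
member of `F`. -/
def Shatters {Y : Type*} (F : Set (Set Y)) (A : Set Y) : Prop :=
  ∀ B ⊆ A, ∃ S ∈ F, S ∩ A = B
/-- `𝔸` is an `(ℓ,t)`-box of height `K` and `𝔸'` is a sub-box of `𝔸` of height `m`
(with respect to a common decomposition): `𝔸 = A₁⋯A_ℓ`, `𝔸' = A₁'⋯A_ℓ'` with `A_i' ⊆ A_i`.
For `ℓ = 0` the only sub-box of a box is the box itself. -/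
def IsSubBoxPair (X : Type*) (ℓ t K m : ℕ) (𝔸 𝔸' : Set (Fin t → X)) : Prop :=
  (ℓ = 0 ∧ 𝔸' = 𝔸 ∧ IsBoxOfHeight X ℓ t K 𝔸) ∨
  (0 < ℓ ∧ ∃ c : Fin t → Fin ℓ, Monotone c ∧ Function.Surjective c ∧
    ∃ A A' : (i : Fin ℓ) → Set ({j : Fin t // c j = i} → X),
      (∀ i, (A i).Finite ∧ (A i).ncard = K) ∧
      (∀ i, (A' i).Finite ∧ (A' i).ncard = m) ∧
      (∀ i, A' i ⊆ A i) ∧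
      𝔸 = { b | ∀ i, (fun j : {j : Fin t // c j = i} => b j.1) ∈ A i } ∧
      𝔸' = { b | ∀ i, (fun j : {j : Fin t // c j = i} => b j.1) ∈ A' i })
/-- The data of a complete equality type in `k` variables over a parameter set contained in `X`:
which pairs of variables are equal, and which variables are equal to which parameters. -/
def EqType (X : Type*) (k : ℕ) :=
  (Fin k → Fin k → Prop) × (Fin k → X → Prop)

/-- The complete equality type over `A ⊆ X` (whose elements are identified with elements of `W`
via `ι`, assumed injective on `A`) realized by the tuple `u : Fin k → W`. -/
def eqTypeOf {X : Type*} {W : Type*} (A : Set X) (ι : X → W) {k : ℕ} (u : Fin k → W) :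
    EqType X k :=
  ⟨fun i j => u i = u j, fun i x => x ∈ A ∧ u i = ι x⟩

/-- `S_k^∅(A)`: the set of complete equality types in `k` variables over `A`; every consistent
such type is realized by a tuple in `X ⊕ Fin k` (with `X` embedded by `Sum.inl`). -/
def EqTypes {X : Type*} (A : Set X) (k : ℕ) : Set (EqType X k) :=
  Set.range fun u : Fin k → (X ⊕ Fin k) => eqTypeOf A Sum.inl u
/-- The structure induced on `α` by pulling back a structure on `β` along a map `f : α → β`
(for relational languages). -/
noncomputable def pullback {L : FirstOrder.Language.{u, v}} [L.IsRelational]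
    {α : Type*} {β : Type*} (f : α → β) (M : L.Structure β) : L.Structure α where
  funMap := fun {_} F _ => isEmptyElim F
  RelMap := fun {_} R x => M.RelMap R (f ∘ x)

/-- A hereditary `L`-property: a family of finite `L`-structures (one set of structures with
universe `Fin n = {1,…,n}` for each `n`), closed under pulling back along arbitrary injections;
this encodes closure under isomorphism and under induced substructures. -/
structure HerProp (L : FirstOrder.Language.{u, v}) [L.IsRelational] where
  sets : ∀ n : ℕ, Set (L.Structure (Fin n))
  hereditary : ∀ {m n : ℕ} (f : Fin m ↪ Fin n) (M : L.Structure (Fin n)),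
    M ∈ sets n → pullback (⇑f) M ∈ sets m

/-- Realization of a first-order formula in a structure given as a term. -/
def realizeIn {L : FirstOrder.Language.{u, v}} {W : Type w} (M : L.Structure W)
    {α : Type*} (φ : L.Formula α) (v : α → W) : Prop :=
  letI := M
  φ.Realize v

/-- The `φ`-type (identified with its positive part, a subset of `𝔸`) of the tuple `a` over the
set of parameter tuples `𝔸` (transferred into `W` via `ι`), in the structure `M`. -/
def phiTypeOf {L : FirstOrder.Language.{u, v}} {W : Type w} (M : L.Structure W) {s t : ℕ}
    (φ : L.Formula (Fin s ⊕ Fin t)) {X : Type*} (𝔸 : Set (Fin t → X)) (ι : X → W)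
    (a : Fin s → W) : Set (Fin t → X) :=
  { b ∈ 𝔸 | realizeIn M φ (Sum.elim a (ι ∘ b)) }

variable {L : FirstOrder.Language.{u, v}} [L.IsRelational]

/-- `S_φ^H(𝔸)`: the set of `φ`-types over `𝔸` (identified with their positive parts)
realized in some member of `H` (the parameters being transferred into the member by an
injection on the underlying set of `𝔸`). -/
def Sphi (H : HerProp L) {s t : ℕ} (φ : L.Formula (Fin s ⊕ Fin t)) {X : Type*}
    (𝔸 : Set (Fin t → X)) : Set (Set (Fin t → X)) :=
  { q | ∃ n : ℕ, ∃ M ∈ H.sets n, ∃ ι : X → Fin n, Set.InjOn ι (underlying 𝔸) ∧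
      ∃ a : Fin s → Fin n, phiTypeOf M φ 𝔸 ι a = q }

/-- `S_{φ,m}^H(𝔸,ρ)`: the set of unions `p₁(x̄₁) ∪ ⋯ ∪ p_m(x̄_m)` (identified with the tuple
`(p₁,…,p_m)` of positive parts of `φ`-types over `𝔸`) realized in some member of `H` by
pairwise distinct `s`-tuples `ā₁,…,ā_m` such that moreover each pair `(ā_i,ā_j)`, `i ≠ j`,
realizes the equality type `ρ` over the underlying set of `𝔸`. -/
def SphiM (H : HerProp L) {s t : ℕ} (φ : L.Formula (Fin s ⊕ Fin t)) (m : ℕ) {X : Type*}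
    (𝔸 : Set (Fin t → X)) (ρ : EqType X (s + s)) : Set (Fin m → Set (Fin t → X)) :=
  { P | ∃ n : ℕ, ∃ M ∈ H.sets n, ∃ ι : X → Fin n, Set.InjOn ι (underlying 𝔸) ∧
      ∃ a : Fin m → Fin s → Fin n, Function.Injective a ∧
        (∀ i, phiTypeOf M φ 𝔸 ι (a i) = P i) ∧
        (∀ i j, i ≠ j → eqTypeOf (underlying 𝔸) ι (Fin.append (a i) (a j)) = ρ) }

/-- The witness predicate for `VC*_ℓ(φ,H) ≥ m`: there are an `(ℓ,t)`-box `𝔸` of height `m`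
and an equality type `ρ ∈ S_{2s}^∅(𝔸)` with `|S_{φ,m}^H(𝔸,ρ)| = 2^(m^(ℓ+1))`. -/
def VCstarWitness (H : HerProp L) (ℓ : ℕ) {s t : ℕ} (φ : L.Formula (Fin s ⊕ Fin t))
    (m : ℕ) : Prop :=
  ∃ 𝔸 : Set (Fin t → ℕ), IsBoxOfHeight ℕ ℓ t m 𝔸 ∧
    ∃ ρ ∈ EqTypes (underlying 𝔸) (s + s),
      Nat.card (SphiM H φ m 𝔸 ρ) = 2 ^ m ^ (ℓ + 1)

/-- `VC*_ℓ(H)`, as an extended natural number: the supremum over quantifier-free partitioned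
formulas `φ(x̄;ȳ)` of `VC*_ℓ(φ,H)`. -/
noncomputable def VCstar (H : HerProp L) (ℓ : ℕ) : ℕ∞ :=
  sSup { N : ℕ∞ | ∃ m : ℕ, N = (m : ℕ∞) ∧ ∃ (s t : ℕ) (φ : L.Formula (Fin s ⊕ Fin t)),
      φ.IsQF ∧ VCstarWitness H ℓ φ m }

lemma box_ncard {W : Type w} {ℓ t : ℕ} (c : Fin t → Fin ℓ)
    (A : (i : Fin ℓ) → Set ({j : Fin t // c j = i} → W)) :
    Nat.card ({b : Fin t → W | ∀ i, (fun j : {j : Fin t // c j = i} => b j.1) ∈ A i})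
      = ∏ i, (A i).ncard := by
  have e : {b : Fin t → W | ∀ i, (fun j : {j : Fin t // c j = i} => b j.1) ∈ A i}
      ≃ ∀ i, A i := {
    toFun := fun b i => ⟨fun j => b.1 j.1, b.2 i⟩
    invFun := fun g => ⟨fun j => (g (c j)).1 ⟨j, rfl⟩, by
      intro i
      have h : (fun j : {j : Fin t // c j = i} => (g (c j.1)).1 ⟨j.1, rfl⟩) = (g i).1 := by
        funext j
        obtain ⟨j1, hj⟩ := j
        subst hj
        rfl
      rw [h]
      exact (g i).2⟩
    left_inv := fun b => rfl
    right_inv := fun g => by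
      funext i
      apply Subtype.ext
      funext j
      obtain ⟨j1, hj⟩ := j
      subst hj
      rfl }
  rw [Nat.card_congr e, Nat.card_pi]
  exact Finset.prod_congr rfl (fun i _ => Nat.card_coe_set_eq (A i))

lemma card_powerset {X : Type w} {s : Set X} (hs : s.Finite) :
    Nat.card (𝒫 s : Set (Set X)) = 2 ^ Nat.card s := by
  haveI := hs.fintype
  rw [Nat.card_congr (Equiv.Set.powerset s), Nat.card_eq_fintype_card,
    Fintype.card_set, Nat.card_eq_fintype_card]

lemma phiTypeOf_restrict {L : FirstOrder.Language.{u, v}} {W : Type w}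
    (M : L.Structure W) {s t : ℕ} (φ : L.Formula (Fin s ⊕ Fin t)) {X : Type*}
    {𝔸 𝔸' : Set (Fin t → X)} (h : 𝔸' ⊆ 𝔸) (ι : X → W) (a : Fin s → W) :
    phiTypeOf M φ 𝔸' ι a = phiTypeOf M φ 𝔸 ι a ∩ 𝔸' := by
  ext b
  exact ⟨fun ⟨h1, h2⟩ => ⟨⟨h h1, h2⟩, h1⟩, fun ⟨⟨_, h2⟩, h3⟩ => ⟨h3, h2⟩⟩

lemma phiTypeOf_subset {L : FirstOrder.Language.{u, v}} {W : Type w}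
    (M : L.Structure W) {s t : ℕ} (φ : L.Formula (Fin s ⊕ Fin t)) {X : Type*}
    (𝔸 : Set (Fin t → X)) (ι : X → W) (a : Fin s → W) :
    phiTypeOf M φ 𝔸 ι a ⊆ 𝔸 := fun _ hb => hb.1

/-- **Lemma 3.2(c).**  For every quantifier-free `φ(x̄;ȳ)`, `ℓ ≥ 1` and `N ≥ m ≥ 1` there is
`K₀` such that for all `K ≥ K₀`: if `M` is an `L`-structure, `𝔸 ⊆ M^{|ȳ|}` is an
`(ℓ,|ȳ|)`-box of height `K` with `|S_φ^H(𝔸)| = 2^(K^ℓ)`, `𝔸' ⊆ 𝔸` is a sub-box of height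
`m`, and `𝔻 ⊆ M^{|x̄|}` contains one realization of every element of `S_φ^H(𝔸)`, then `𝔻`
contains at least `N` realizations of every element of `S_φ^H(𝔸')`. -/
theorem statement10 {L : FirstOrder.Language.{u, v}} [L.IsRelational]
    [∀ n, Finite (L.Relations n)] (H : HerProp L) {s t : ℕ}
    (φ : L.Formula (Fin s ⊕ Fin t)) (hφ : φ.IsQF) (ℓ N m : ℕ) (hℓ : 1 ≤ ℓ)
    (hm : 1 ≤ m) (hNm : m ≤ N) :
    ∃ K₀ : ℕ, ∀ K, K₀ ≤ K → ∀ (W : Type w) (M : L.Structure W)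
      (𝔸 𝔸' : Set (Fin t → W)),
      IsSubBoxPair W ℓ t K m 𝔸 𝔸' →
      Nat.card (Sphi H φ 𝔸) = 2 ^ K ^ ℓ →
      ∀ 𝔻 : Set (Fin s → W),
        (∀ q ∈ Sphi H φ 𝔸, ∃ a ∈ 𝔻, phiTypeOf M φ 𝔸 id a = q) →
        ∀ q' ∈ Sphi H φ 𝔸', ∃ e : Fin N → (Fin s → W), Function.Injective e ∧
          ∀ k, e k ∈ 𝔻 ∧ phiTypeOf M φ 𝔸' id (e k) = q' := by
  refine ⟨(N + 1) * m, fun K hK W M 𝔸 𝔸' hbox hcard 𝔻 h𝔻 q' hq' => ?_⟩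
  rcases hbox with ⟨hℓ0, _⟩ | ⟨-, c, hmono, hsurj, A, A', hA, hA', hsub, h𝔸, h𝔸'⟩
  · omega
  have hK1 : 1 ≤ K := le_trans (Nat.mul_le_mul (Nat.succ_le_succ (Nat.zero_le N)) hm) hK
  -- cardinalities of the boxes
  have hcard𝔸 : Nat.card 𝔸 = K ^ ℓ := by
    rw [h𝔸, box_ncard c A]
    calc ∏ i, (A i).ncard = ∏ _i : Fin ℓ, K :=
          Finset.prod_congr rfl (fun i _ => (hA i).2)
      _ = K ^ ℓ := by simp
  have hcard𝔸' : Nat.card 𝔸' = m ^ ℓ := by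
    rw [h𝔸', box_ncard c A']
    calc ∏ i, (A' i).ncard = ∏ _i : Fin ℓ, m :=
          Finset.prod_congr rfl (fun i _ => (hA' i).2)
      _ = m ^ ℓ := by simp
  have hfin𝔸 : 𝔸.Finite := by
    rw [← Set.finite_coe_iff]
    exact Nat.finite_of_card_ne_zero (by rw [hcard𝔸]; positivity)
  have h𝔸'sub : 𝔸' ⊆ 𝔸 := by
    rw [h𝔸, h𝔸']
    exact fun b hb i => hsub i (hb i)
  have hfin𝔸' : 𝔸'.Finite := hfin𝔸.subset h𝔸'sub
  -- every subset of 𝔸 is a realized type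
  have hSsub : Sphi H φ 𝔸 ⊆ 𝒫 𝔸 := by
    rintro q ⟨n, M', hM', ι, hι, a, rfl⟩
    exact phiTypeOf_subset M' φ 𝔸 ι a
  have hP : Nat.card (𝒫 𝔸 : Set (Set (Fin t → W))) = 2 ^ K ^ ℓ := by
    rw [card_powerset hfin𝔸, hcard𝔸]
  have hPfin : (𝒫 𝔸 : Set (Set (Fin t → W))).Finite := by
    rw [← Set.finite_coe_iff]
    exact Nat.finite_of_card_ne_zero (by rw [hP]; positivity)
  have hSeq : Sphi H φ 𝔸 = 𝒫 𝔸 := by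
    refine Set.eq_of_subset_of_ncard_le hSsub ?_ hPfin
    rw [← Nat.card_coe_set_eq, ← Nat.card_coe_set_eq, hP, hcard]
  have hq'sub : q' ⊆ 𝔸' := by
    obtain ⟨n, M', hM', ι, hι, a, rfl⟩ := hq'
    exact phiTypeOf_subset M' φ 𝔸' ι a
  -- find N distinct elements of 𝔸 \ 𝔸'
  have hdiffcard : N ≤ (𝔸 \ 𝔸').ncard := by
    rw [Set.ncard_diff h𝔸'sub hfin𝔸']
    have h1 : 𝔸.ncard = K ^ ℓ := by rw [← Nat.card_coe_set_eq, hcard𝔸]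
    have h2 : 𝔸'.ncard = m ^ ℓ := by rw [← Nat.card_coe_set_eq, hcard𝔸']
    rw [h1, h2]
    have hm1 : 1 ≤ m ^ ℓ := Nat.one_le_pow _ _ hm
    have hmain : N + m ^ ℓ ≤ K ^ ℓ :=
      calc N + m ^ ℓ ≤ (N + 1) * m ^ ℓ := by nlinarith
        _ ≤ (N + 1) ^ ℓ * m ^ ℓ :=
            Nat.mul_le_mul_right _ (Nat.le_self_pow (by omega) _)
        _ = ((N + 1) * m) ^ ℓ := (mul_pow _ _ _).symm
        _ ≤ K ^ ℓ := Nat.pow_le_pow_left hK ℓ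
    omega
  have hdfin : (𝔸 \ 𝔸').Finite := hfin𝔸.diff
  haveI := hdfin.fintype
  obtain ⟨f⟩ : Nonempty (Fin N ↪ ↥(𝔸 \ 𝔸')) := by
    apply Function.Embedding.nonempty_of_card_le
    rwa [Fintype.card_fin, ← Nat.card_eq_fintype_card, Nat.card_coe_set_eq]
  -- choose realizations of the types q' ∪ {f k}
  have hqk : ∀ k : Fin N, insert (f k).1 q' ∈ Sphi H φ 𝔸 := by
    intro k
    rw [hSeq]
    exact Set.insert_subset (f k).2.1 (hq'sub.trans h𝔸'sub)
  choose a ha𝔻 hatype using fun k => h𝔻 _ (hqk k)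
  have hnotin : ∀ k : Fin N, (f k).1 ∉ q' := fun k hk => (f k).2.2 (hq'sub hk)
  refine ⟨a, ?_, fun k => ⟨ha𝔻 k, ?_⟩⟩
  · intro k k' hkk'
    have hq : insert (f k).1 q' = insert (f k').1 q' := by
      rw [← hatype k, ← hatype k', hkk']
    have : (f k).1 ∈ insert (f k').1 q' := hq ▸ Set.mem_insert _ _
    rcases this with h | h
    · exact f.injective (Subtype.ext h)
    · exact absurd h (hnotin k)
  · rw [phiTypeOf_restrict M φ h𝔸'sub id (a k), hatype k]
    ext b
    constructor
    · rintro ⟨h1 | h1, h2⟩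
      · exact absurd (h1 ▸ h2) (f k).2.2
      · exact h1
    · exact fun hb => ⟨Set.mem_insert_of_mem _ hb, hq'sub hb⟩

end PaperVC
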